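/- If μ is a Radon measure on ℝ^d with non-empty support, then there exists x ∈ spt μ such that L^d ∉ Tan(μ,x) or L^{d,+} ∉ Tan(μ,x), where L^d is Lebesgue measure on ℝ^d and L^{d,+} is L^d restricted to the positive orthant ℝ^{d,+} = {(x_1,…,x_d) : x_i ≥ 0 for all i}. -/

import Mathlib

open MeasureTheory Filter Topology Metric Set

noncomputable section

abbrev Ed (d : ℕ) := EuclideanSpace ℝ (Fin d)

/-- Weak convergence of a sequence of measures, tested against continuous
compactly supported functions. -/
def WeakTendsto {d : ℕ} (μs : ℕ → Measure (Ed d)) (ν : Measure (Ed d)) : Prop :=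
  ∀ φ : Ed d → ℝ, Continuous φ → HasCompactSupport φ →
    Tendsto (fun i => ∫ x, φ x ∂(μs i)) atTop (𝓝 (∫ x, φ x ∂ν))

/-- The measure `c • T_{x,r♯} μ`, where `T_{x,r♯}μ(A) = μ(rA + x)`. -/
def blowup {d : ℕ} (μ : Measure (Ed d)) (x : Ed d) (r c : ℝ) : Measure (Ed d) :=
  ENNReal.ofReal c • Measure.map (fun y => r⁻¹ • (y - x)) μ

/-- `ν` is a tangent measure of `μ` at `x`. -/
def IsTangentMeasure {d : ℕ} (μ : Measure (Ed d)) (x : Ed d) (ν : Measure (Ed d)) : Prop :=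
  IsLocallyFiniteMeasure ν ∧ ν ≠ 0 ∧
    ∃ r c : ℕ → ℝ, (∀ i, 0 < r i) ∧ StrictAnti r ∧ Tendsto r atTop (𝓝 0) ∧
      (∀ i, 0 < c i) ∧ WeakTendsto (fun i => blowup μ x (r i) (c i)) ν

/-- The support of a measure. -/
def sptM {d : ℕ} (μ : Measure (Ed d)) : Set (Ed d) :=
  {x | ∀ r > 0, 0 < μ (closedBall x r)}

/-- The positive orthant `ℝ^{d,+}`. -/
def orthant (d : ℕ) : Set (Ed d) := {x | ∀ i, 0 ≤ x i}

namespace Stmt7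

/-! ### Basic geometry in `Ed d` -/

variable {d : ℕ}

lemma coord_dist_le (x y : Ed d) (i : Fin d) : |x i - y i| ≤ dist x y := by
  rw [EuclideanSpace.dist_eq]
  have h1 : |x i - y i| = Real.sqrt (dist (x i) (y i) ^ 2) := by
    rw [Real.sqrt_sq_eq_abs, Real.dist_eq, abs_abs]
  rw [h1]
  apply Real.sqrt_le_sqrt
  exact Finset.single_le_sum (f := fun j => dist (x j) (y j) ^ 2)
    (fun j _ => sq_nonneg _) (Finset.mem_univ i)

lemma coord_le_of_mem_closedBall {c : Ed d} {r : ℝ} {u : Ed d}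
    (hu : u ∈ closedBall c r) (i : Fin d) : u i ≤ c i + r := by
  have := coord_dist_le u c i
  rw [mem_closedBall] at hu
  have := abs_le.1 (this.trans hu)
  linarith [this.2]

lemma coord_ge_of_mem_closedBall {c : Ed d} {r : ℝ} {u : Ed d}
    (hu : u ∈ closedBall c r) (i : Fin d) : c i - r ≤ u i := by
  have := coord_dist_le u c i
  rw [mem_closedBall] at hu
  have := abs_le.1 (this.trans hu)
  linarith [this.1]

/-- The all-ones vector. -/
def onesv (d : ℕ) : Ed d := WithLp.toLp 2 (fun _ => (1 : ℝ))

@[simp] lemma onesv_apply (i : Fin d) : onesv d i = 1 := rfl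

lemma norm_onesv_le : ‖onesv d‖ ≤ (d : ℝ) + 1 := by
  rw [EuclideanSpace.norm_eq]
  have h1 : ∑ i : Fin d, ‖onesv d i‖ ^ 2 = (d : ℝ) := by
    simp [onesv]
  rw [h1]
  have h2 : (d : ℝ) ≤ ((d : ℝ) + 1) ^ 2 := by nlinarith [Nat.cast_nonneg (α := ℝ) d]
  calc Real.sqrt d ≤ Real.sqrt (((d:ℝ)+1)^2) := Real.sqrt_le_sqrt h2
    _ = (d : ℝ) + 1 := by
        rw [Real.sqrt_sq_eq_abs]; rw [abs_of_nonneg]; positivity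

variable (hd : 0 < d)

/-- The first coordinate index. -/
def j0 (hd : 0 < d) : Fin d := ⟨0, hd⟩

/-- The first basis vector. -/
def e1 (hd : 0 < d) : Ed d := WithLp.toLp 2 (fun j => if j = j0 hd then (1:ℝ) else 0)

lemma e1_apply (j : Fin d) : e1 hd j = if j = j0 hd then (1:ℝ) else 0 := rfl

lemma norm_e1 : ‖e1 hd‖ = 1 := by
  rw [EuclideanSpace.norm_eq]
  have h1 : ∑ i : Fin d, ‖e1 hd i‖ ^ 2 = 1 := by
    rw [Fintype.sum_eq_single (j0 hd)]
    · simp [e1_apply]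
    · intro j hj; simp [e1_apply, hj]
  rw [h1, Real.sqrt_one]


/-! ### Constants and templates -/

variable (d) in
/-- `D = d+1`. -/
abbrev Dc : ℝ := (d : ℝ) + 1

lemma Dc_pos : 0 < Dc d := by positivity

lemma two_le_Dc (hd : 0 < d) : 2 ≤ Dc d := by
  have : (1:ℝ) ≤ (d:ℝ) := by exact_mod_cast hd
  simp only [Dc]; linarith

variable (d) in
abbrev Kc : ℝ := 2000 * Dc d

variable (d) in
abbrev etac : ℝ := 1 / (1000 * Dc d)

lemma Kc_pos : 0 < Kc d := by
  have := Dc_pos (d := d); simp only [Kc]; positivity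

lemma Kc_ge : 2000 ≤ Kc d := by
  simp only [Kc, Dc]
  nlinarith [Nat.cast_nonneg (α := ℝ) d]

lemma etac_pos : 0 < etac d := by
  have := Dc_pos (d := d); simp only [etac]; positivity

lemma Kc_mul_etac : Kc d * etac d = 2 := by
  have := Dc_pos (d := d)
  field_simp [Kc, etac]
  ring

variable (d) in
/-- The restricted Lebesgue measure `L^{d,+}`. -/
def nu : Measure (Ed d) := volume.restrict (orthant d)

lemma continuous_coord (i : Fin d) : Continuous (fun x : Ed d => x i) :=
  (continuous_apply i).comp (PiLp.continuousLinearEquiv 2 ℝ _).continuous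

lemma isClosed_orthant : IsClosed (orthant d) := by
  have : orthant d = ⋂ i : Fin d, {x : Ed d | 0 ≤ x i} := by
    ext x; simp [orthant, mem_iInter]
  rw [this]
  exact isClosed_iInter fun i => isClosed_le continuous_const (continuous_coord i)

lemma measurableSet_orthant : MeasurableSet (orthant d) :=
  (isClosed_orthant).measurableSet

lemma nu_apply (S : Set (Ed d)) : nu d S = volume (S ∩ orthant d) :=
  Measure.restrict_apply' measurableSet_orthant

lemma nu_le_volume (S : Set (Ed d)) : nu d S ≤ volume S := by
  rw [nu_apply]; exact measure_mono inter_subset_left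

lemma nu_closedBall_ne_top (c : Ed d) (r : ℝ) : nu d (closedBall c r) ≠ ⊤ :=
  ((nu_le_volume _).trans_lt measure_closedBall_lt_top).ne

lemma subset_orthant_of_coords {c : Ed d} {r : ℝ} (h : ∀ i, r ≤ c i) :
    closedBall c r ⊆ orthant d := fun u hu i => by
  have h1 := coord_ge_of_mem_closedBall hu i
  have h2 := h i
  simp only [orthant, mem_setOf_eq] at *
  linarith

lemma nu_closedBall_pos {c : Ed d} {r : ℝ} (h : closedBall c r ⊆ orthant d) (hr : 0 < r) :
    0 < nu d (closedBall c r) := by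
  rw [nu_apply]
  have : closedBall c r ∩ orthant d = closedBall c r := inter_eq_left.2 h
  rw [this]
  calc (0 : ENNReal) < volume (ball c r) := measure_ball_pos _ _ hr
    _ ≤ volume (closedBall c r) := measure_mono ball_subset_closedBall

variable (hd : 0 < d)

/-- unit-scale template center for the "witness" ball (deep inside the orthant,
to the left of the recentering point). -/
def W0 (hd : 0 < d) : Ed d := (3/20 : ℝ) • e1 hd + (1/(10 * Dc d)) • onesv d

/-- unit-scale template center for the recentering point. -/
def V0 (hd : 0 < d) : Ed d := (8/25 : ℝ) • e1 hd + (1/(10 * Dc d)) • onesv d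

def c00 (d : ℕ) : Ed d := (1/(2 * Dc d)) • onesv d

lemma W0_apply (j : Fin d) :
    W0 hd j = (if j = j0 hd then (3/20:ℝ) else 0) + 1/(10 * Dc d) := by
  simp only [W0, PiLp.add_apply, PiLp.smul_apply, e1_apply, onesv_apply, smul_eq_mul]
  split <;> ring

lemma V0_apply (j : Fin d) :
    V0 hd j = (if j = j0 hd then (8/25:ℝ) else 0) + 1/(10 * Dc d) := by
  simp only [V0, PiLp.add_apply, PiLp.smul_apply, e1_apply, onesv_apply, smul_eq_mul]
  split <;> ring

lemma c00_apply (j : Fin d) : c00 d j = 1/(2 * Dc d) := by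
  simp only [c00, PiLp.smul_apply, onesv_apply, smul_eq_mul]; ring

lemma norm_smul_onesv_le (c : ℝ) (hc : 0 ≤ c) : ‖c • onesv d‖ ≤ c * ((d:ℝ)+1) := by
  rw [norm_smul, Real.norm_eq_abs, abs_of_nonneg hc]
  exact mul_le_mul_of_nonneg_left norm_onesv_le hc

lemma norm_W0_le : ‖W0 hd‖ ≤ 1/4 := by
  have hD := Dc_pos (d := d)
  calc ‖W0 hd‖ ≤ ‖(3/20 : ℝ) • e1 hd‖ + ‖(1/(10 * Dc d)) • onesv d‖ := norm_add_le _ _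
    _ ≤ 3/20 * 1 + (1/(10 * Dc d)) * ((d:ℝ)+1) := by
        apply add_le_add
        · rw [norm_smul, Real.norm_eq_abs, abs_of_nonneg (by norm_num), norm_e1]
        · exact norm_smul_onesv_le _ (by positivity)
    _ = 3/20 + 1/10 := by
        have : (1/(10 * Dc d)) * ((d:ℝ)+1) = 1/10 := by
          rw [show ((d:ℝ)+1) = Dc d from rfl]; field_simp
        rw [this]; ring
    _ ≤ 1/4 := by norm_num

lemma norm_V0_le : ‖V0 hd‖ ≤ 1/2 := by
  have hD := Dc_pos (d := d)
  calc ‖V0 hd‖ ≤ ‖(8/25 : ℝ) • e1 hd‖ + ‖(1/(10 * Dc d)) • onesv d‖ := norm_add_le _ _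
    _ ≤ 8/25 * 1 + (1/(10 * Dc d)) * ((d:ℝ)+1) := by
        apply add_le_add
        · rw [norm_smul, Real.norm_eq_abs, abs_of_nonneg (by norm_num), norm_e1]
        · exact norm_smul_onesv_le _ (by positivity)
    _ ≤ 1/2 := by
        have : (1/(10 * Dc d)) * ((d:ℝ)+1) = 1/10 := by
          rw [show ((d:ℝ)+1) = Dc d from rfl]; field_simp
        rw [this]; norm_num

lemma norm_V0_sub_W0 : ‖V0 hd - W0 hd‖ ≤ 17/100 := by
  have : V0 hd - W0 hd = (17/100 : ℝ) • e1 hd := by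
    simp only [V0, W0]
    rw [add_sub_add_right_eq_sub, ← sub_smul]
    norm_num
  rw [this, norm_smul, Real.norm_eq_abs, abs_of_nonneg (by norm_num), norm_e1]
  norm_num

/-! ### The main numerical constants -/

def a1c (d : ℕ) : ℝ := (nu d (closedBall (c00 d) (1/(8 * Dc d)))).toReal

def A2c (d : ℕ) : ℝ := (nu d (closedBall 0 (Kc d + 1))).toReal

def cWb (hd : 0 < d) : ℝ := (nu d (closedBall (W0 hd) (1/(200 * Dc d)))).toReal

def c5b (hd : 0 < d) : ℝ := (nu d (closedBall (V0 hd) (1/(200 * Dc d)))).toReal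

def Cdc (d : ℕ) : ℝ := 2 * (A2c d + 1) / a1c d

def cWc (hd : 0 < d) : ℝ := cWb hd / (2 * (A2c d + 1))

def c5c (hd : 0 < d) : ℝ := c5b hd / (2 * (A2c d + 1))

/-- The main small constant `ε̂`. -/
def epsh (hd : 0 < d) : ℝ := min (cWc hd / (2 * (Cdc d + 1))) (c5c hd / 2)

lemma a1c_pos : 0 < a1c d := by
  have hD := Dc_pos (d := d)
  apply ENNReal.toReal_pos _ (nu_closedBall_ne_top _ _)
  refine (nu_closedBall_pos ?_ (by positivity)).ne'
  apply subset_orthant_of_coords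
  intro i
  rw [c00_apply]
  rw [div_le_div_iff₀ (by positivity) (by positivity)]
  nlinarith

lemma A2c_nonneg : 0 ≤ A2c d := ENNReal.toReal_nonneg

lemma cWb_pos : 0 < cWb hd := by
  have hD := Dc_pos (d := d)
  apply ENNReal.toReal_pos _ (nu_closedBall_ne_top _ _)
  refine (nu_closedBall_pos ?_ (by positivity)).ne'
  apply subset_orthant_of_coords
  intro i
  rw [W0_apply]
  have : (0:ℝ) ≤ if i = j0 hd then (3/20:ℝ) else 0 := by split <;> norm_num
  have h2 : 1/(200 * Dc d) ≤ 1/(10 * Dc d) := by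
    apply div_le_div_of_nonneg_left (by norm_num) (by positivity)
    nlinarith
  linarith

lemma c5b_pos : 0 < c5b hd := by
  have hD := Dc_pos (d := d)
  apply ENNReal.toReal_pos _ (nu_closedBall_ne_top _ _)
  refine (nu_closedBall_pos ?_ (by positivity)).ne'
  apply subset_orthant_of_coords
  intro i
  rw [V0_apply]
  have : (0:ℝ) ≤ if i = j0 hd then (8/25:ℝ) else 0 := by split <;> norm_num
  have h2 : 1/(200 * Dc d) ≤ 1/(10 * Dc d) := by
    apply div_le_div_of_nonneg_left (by norm_num) (by positivity)
    nlinarith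
  linarith

lemma Cdc_pos : 0 < Cdc d := by
  have h1 := a1c_pos (d := d)
  have h2 := A2c_nonneg (d := d)
  apply div_pos (by linarith) h1

lemma cWc_pos : 0 < cWc hd := by
  have h1 := cWb_pos hd
  have h2 := A2c_nonneg (d := d)
  apply div_pos h1 (by linarith)

lemma c5c_pos : 0 < c5c hd := by
  have h1 := c5b_pos hd
  have h2 := A2c_nonneg (d := d)
  apply div_pos h1 (by linarith)

lemma epsh_pos : 0 < epsh hd := by
  have h1 := cWc_pos hd
  have h2 := c5c_pos hd
  have h3 := Cdc_pos (d := d)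
  apply lt_min (by positivity) (by positivity)


/-! ### Thickened sets and the weak convergence machinery -/

def thick (A : Set (Ed d)) (t : ℝ) : Set (Ed d) := {u | infDist u A ≤ t}

lemma isClosed_thick {A : Set (Ed d)} {t : ℝ} : IsClosed (thick A t) :=
  isClosed_le (continuous_infDist_pt A) continuous_const

lemma thick_mono {A B : Set (Ed d)} {t : ℝ} (hAB : A ⊆ B) (hA : A.Nonempty) :
    thick A t ⊆ thick B t := fun u hu =>
  le_trans (infDist_le_infDist_of_subset hAB hA) hu

lemma thick_closedBall_subset {c : Ed d} {r t : ℝ} (hr : 0 ≤ r) :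
    thick (closedBall c r) t ⊆ closedBall c (r + t) := by
  intro u hu
  simp only [thick, mem_setOf_eq] at hu
  rw [mem_closedBall]
  by_contra hcon
  push_neg at hcon
  have hne : (closedBall c r).Nonempty := nonempty_closedBall.2 hr
  have h1 : infDist u (closedBall c r) < dist u c - r := lt_of_le_of_lt hu (by linarith)
  obtain ⟨a, ha, hda⟩ := (infDist_lt_iff hne).1 h1
  rw [mem_closedBall] at ha
  linarith [dist_triangle u a c]

lemma thick_halfspace_subset (hd : 0 < d) {b t : ℝ} :
    thick {u : Ed d | u (j0 hd) ≤ b} t ⊆ {u : Ed d | u (j0 hd) ≤ b + t} := by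
  intro u hu
  simp only [thick, mem_setOf_eq] at hu ⊢
  have hne : ({u : Ed d | u (j0 hd) ≤ b}).Nonempty := by
    refine ⟨b • e1 hd, ?_⟩
    have hb : (b • e1 hd) (j0 hd) = b := by
      simp only [PiLp.smul_apply, e1_apply, if_pos rfl, if_true, smul_eq_mul, mul_one]
    simp only [mem_setOf_eq, hb, le_refl]
  apply le_of_forall_pos_le_add
  intro ε hε
  have h1 : infDist u {u : Ed d | u (j0 hd) ≤ b} < t + ε := lt_of_le_of_lt hu (by linarith)
  obtain ⟨a, ha, hda⟩ := (infDist_lt_iff hne).1 h1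
  simp only [mem_setOf_eq] at ha
  have h2 := coord_dist_le u a (j0 hd)
  have h3 := abs_le.1 h2
  linarith [h3.2]

lemma thick_bounded {A : Set (Ed d)} {t : ℝ} (hA : Bornology.IsBounded A) (hne : A.Nonempty) :
    ∃ R : ℝ, 0 ≤ R ∧ thick A t ⊆ closedBall 0 R := by
  obtain ⟨r, hr⟩ := hA.subset_closedBall 0
  have hr0 : 0 ≤ max r 0 := le_max_right _ _
  refine ⟨max r 0 + max t 0, by positivity, ?_⟩
  intro u hu
  have h1 : infDist u (closedBall (0 : Ed d) (max r 0)) ≤ t :=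
    le_trans (infDist_le_infDist_of_subset (hr.trans (closedBall_subset_closedBall (le_max_left _ _))) hne) hu
  have h2 : u ∈ thick (closedBall (0 : Ed d) (max r 0)) (max t 0) :=
    le_trans h1 (le_max_left _ _)
  exact thick_closedBall_subset hr0 h2

section weak

variable {ms : ℕ → Measure (Ed d)} {ν : Measure (Ed d)}

/-- The standard bump function used for sandwiching. -/
def bump (A : Set (Ed d)) (t : ℝ) : Ed d → ℝ := fun u => max (1 - infDist u A / t) 0

lemma bump_continuous {A : Set (Ed d)} {t : ℝ} : Continuous (bump A t) :=
  ((continuous_const.sub ((continuous_infDist_pt A).div_const t)).max continuous_const)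

lemma bump_nonneg {A : Set (Ed d)} {t : ℝ} (u : Ed d) : 0 ≤ bump A t u := le_max_right _ _

lemma bump_le_one {A : Set (Ed d)} {t : ℝ} (ht : 0 < t) (u : Ed d) : bump A t u ≤ 1 := by
  apply max_le _ zero_le_one
  have := infDist_nonneg (x := u) (s := A)
  have : 0 ≤ infDist u A / t := by positivity
  linarith

lemma bump_eq_one {A : Set (Ed d)} {t : ℝ} (ht : 0 < t) {u : Ed d} (hu : u ∈ A) :
    bump A t u = 1 := by
  simp [bump, infDist_zero_of_mem hu]

lemma bump_mem_thick {A : Set (Ed d)} {t : ℝ} (ht : 0 < t) {u : Ed d}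
    (hu : bump A t u ≠ 0) : u ∈ thick A t := by
  simp only [bump, thick, mem_setOf_eq] at *
  rcases le_or_gt (infDist u A) t with h | h
  · exact h
  · exfalso; apply hu
    rw [max_eq_right]
    rw [sub_nonpos]
    rw [le_div_iff₀ ht] at *
    nlinarith [h]

lemma bump_hasCompactSupport {A : Set (Ed d)} {t : ℝ} (ht : 0 < t)
    (hA : Bornology.IsBounded A) (hne : A.Nonempty) : HasCompactSupport (bump A t) := by
  obtain ⟨R, hR0, hR⟩ := thick_bounded (t := t) hA hne
  apply HasCompactSupport.intro (isCompact_closedBall (0 : Ed d) R)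
  intro u hu
  by_contra hcon
  exact hu (hR (bump_mem_thick ht hcon))

lemma bump_integrable {A : Set (Ed d)} {t : ℝ} (ht : 0 < t)
    (hA : Bornology.IsBounded A) (hne : A.Nonempty)
    (m : Measure (Ed d)) [IsFiniteMeasureOnCompacts m] : Integrable (bump A t) m :=
  bump_continuous.integrable_of_hasCompactSupport (bump_hasCompactSupport ht hA hne)

lemma measure_le_integral_bump {A : Set (Ed d)} {t : ℝ} (ht : 0 < t)
    (hAm : MeasurableSet A) (hA : Bornology.IsBounded A) (hne : A.Nonempty)
    (m : Measure (Ed d)) [IsFiniteMeasureOnCompacts m] (hfin : m A ≠ ⊤) :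
    (m A).toReal ≤ ∫ u, bump A t u ∂m := by
  have h1 : (m A).toReal = ∫ u, A.indicator (fun _ => (1:ℝ)) u ∂m := by
    rw [show (fun _ => (1:ℝ)) = (1 : Ed d → ℝ) from rfl, integral_indicator_one hAm]; rfl
  rw [h1]
  apply integral_mono
  · exact (integrable_indicator_iff hAm).2 (integrableOn_const hfin)
  · exact bump_integrable ht hA hne m
  · intro u
    by_cases hu : u ∈ A
    · rw [indicator_of_mem hu]
      exact (bump_eq_one ht hu).ge
    · rw [indicator_of_notMem hu]
      exact bump_nonneg u

lemma integral_bump_le_measure {A : Set (Ed d)} {t : ℝ} (ht : 0 < t)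
    (hA : Bornology.IsBounded A) (hne : A.Nonempty)
    {Bs : Set (Ed d)} (hB : thick A t ⊆ Bs) (hBm : MeasurableSet Bs)
    (m : Measure (Ed d)) [IsFiniteMeasureOnCompacts m] (hfin : m Bs ≠ ⊤) :
    ∫ u, bump A t u ∂m ≤ (m Bs).toReal := by
  have h1 : (m Bs).toReal = ∫ u, Bs.indicator (fun _ => (1:ℝ)) u ∂m := by
    rw [show (fun _ => (1:ℝ)) = (1 : Ed d → ℝ) from rfl, integral_indicator_one hBm]; rfl
  rw [h1]
  apply integral_mono
  · exact bump_integrable ht hA hne m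
  · exact (integrable_indicator_iff hBm).2 (integrableOn_const hfin)
  · intro u
    by_cases hu : u ∈ Bs
    · rw [indicator_of_mem hu]
      exact bump_le_one ht u
    · rw [indicator_of_notMem hu]
      rcases eq_or_ne (bump A t u) 0 with h | h
      · rw [h]
      · exact (hu (hB (bump_mem_thick ht h))).elim

lemma lemU (hWT : WeakTendsto ms ν)
    (hfin : ∀ i (S : Set (Ed d)), Bornology.IsBounded S → ms i S ≠ ⊤)
    [IsLocallyFiniteMeasure ν]
    {A : Set (Ed d)} (hAm : MeasurableSet A) (hAc : IsClosed A) (hAb : Bornology.IsBounded A)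
    (hAne : A.Nonempty)
    {t : ℝ} (ht : 0 < t) {ε : ℝ} (hε : 0 < ε) :
    ∀ᶠ i in atTop, ms i A ≤ ν (thick A t) + ENNReal.ofReal ε := by
  haveI : ∀ i, IsFiniteMeasureOnCompacts (ms i) :=
    fun i => ⟨fun K hK => ((hfin i K hK.isBounded)).lt_top⟩
  have hthfin : ν (thick A t) ≠ ⊤ := by
    obtain ⟨R, hR0, hR⟩ := thick_bounded (t := t) hAb hAne
    exact ((measure_mono hR).trans_lt measure_closedBall_lt_top).ne
  have hkey : ∀ᶠ i in atTop,
      ∫ u, bump A t u ∂(ms i) ≤ (∫ u, bump A t u ∂ν) + ε := by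
    apply Filter.Tendsto.eventually_le_const (by linarith)
      (hWT _ bump_continuous (bump_hasCompactSupport ht hAb hAne))
  filter_upwards [hkey] with i hi
  have h1 : (ms i A).toReal ≤ ∫ u, bump A t u ∂(ms i) :=
    measure_le_integral_bump ht hAm hAb hAne _ (hfin i A hAb)
  have h2 : ∫ u, bump A t u ∂ν ≤ (ν (thick A t)).toReal :=
    integral_bump_le_measure ht hAb hAne subset_rfl isClosed_thick.measurableSet _ hthfin
  calc ms i A = ENNReal.ofReal ((ms i A).toReal) := (ENNReal.ofReal_toReal (hfin i A hAb)).symm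
    _ ≤ ENNReal.ofReal ((ν (thick A t)).toReal + ε) := by
        apply ENNReal.ofReal_le_ofReal; linarith
    _ = ENNReal.ofReal ((ν (thick A t)).toReal) + ENNReal.ofReal ε := by
        rw [ENNReal.ofReal_add ENNReal.toReal_nonneg hε.le]
    _ = ν (thick A t) + ENNReal.ofReal ε := by rw [ENNReal.ofReal_toReal hthfin]

lemma lemL (hWT : WeakTendsto ms ν)
    (hfin : ∀ i (S : Set (Ed d)), Bornology.IsBounded S → ms i S ≠ ⊤)
    [IsLocallyFiniteMeasure ν]
    {C : Set (Ed d)} (hCc : IsClosed C) (hCb : Bornology.IsBounded C) (hCne : C.Nonempty)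
    {t : ℝ} (ht : 0 < t)
    {Bs : Set (Ed d)} (hB : thick C t ⊆ Bs) (hBm : MeasurableSet Bs) (hBb : Bornology.IsBounded Bs)
    {ε : ℝ} (hε : 0 < ε) :
    ∀ᶠ i in atTop, ν C ≤ ms i Bs + ENNReal.ofReal ε := by
  haveI : ∀ i, IsFiniteMeasureOnCompacts (ms i) :=
    fun i => ⟨fun K hK => ((hfin i K hK.isBounded)).lt_top⟩
  have hCfin : ν C ≠ ⊤ := by
    obtain ⟨r, hr⟩ := hCb.subset_closedBall 0
    exact ((measure_mono hr).trans_lt measure_closedBall_lt_top).ne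
  have hkey : ∀ᶠ i in atTop,
      (∫ u, bump C t u ∂ν) - ε ≤ ∫ u, bump C t u ∂(ms i) := by
    have := hWT _ bump_continuous (bump_hasCompactSupport ht hCb hCne)
    have h2 : ∀ᶠ (y : ℝ) in 𝓝 (∫ u, bump C t u ∂ν), (∫ u, bump C t u ∂ν) - ε ≤ y := by
      apply Filter.Tendsto.eventually_const_le (by linarith) tendsto_id
    exact this.eventually h2
  filter_upwards [hkey] with i hi
  have h1 : (ν C).toReal ≤ ∫ u, bump C t u ∂ν :=
    measure_le_integral_bump ht hCc.measurableSet hCb hCne _ hCfin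
  have h2 : ∫ u, bump C t u ∂(ms i) ≤ (ms i Bs).toReal :=
    integral_bump_le_measure ht hCb hCne hB hBm _ (hfin i Bs hBb)
  calc ν C = ENNReal.ofReal ((ν C).toReal) := (ENNReal.ofReal_toReal hCfin).symm
    _ ≤ ENNReal.ofReal ((ms i Bs).toReal + ε) := by
        apply ENNReal.ofReal_le_ofReal; linarith
    _ = ENNReal.ofReal ((ms i Bs).toReal) + ENNReal.ofReal ε := by
        rw [ENNReal.ofReal_add ENNReal.toReal_nonneg hε.le]
    _ = ms i Bs + ENNReal.ofReal ε := by rw [ENNReal.ofReal_toReal (hfin i Bs hBb)]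

end weak


/-! ### Blowup computations -/

lemma Tmap_continuous (x : Ed d) (r : ℝ) : Continuous (fun y : Ed d => r⁻¹ • (y - x)) :=
  by fun_prop

lemma Tmap_measurable (x : Ed d) (r : ℝ) : Measurable (fun y : Ed d => r⁻¹ • (y - x)) :=
  (Tmap_continuous x r).measurable

lemma Tmap_preimage_closedBall (x : Ed d) {r : ℝ} (hr : 0 < r) (a : Ed d) (ρ : ℝ) :
    (fun y : Ed d => r⁻¹ • (y - x)) ⁻¹' (closedBall a ρ) = closedBall (x + r • a) (r * ρ) := by
  ext y
  simp only [mem_preimage, mem_closedBall, dist_eq_norm]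
  have hveq : r⁻¹ • (y - x) - a = r⁻¹ • (y - (x + r • a)) := by
    have h1 : y - (x + r • a) = (y - x) - r • a := by abel
    rw [h1, smul_sub r⁻¹ (y - x) (r • a), smul_smul, inv_mul_cancel₀ (ne_of_gt hr), one_smul]
  rw [hveq, norm_smul, Real.norm_eq_abs, abs_of_nonneg (inv_nonneg.2 hr.le)]
  rw [inv_mul_le_iff₀ hr]

lemma Tmap_preimage_halfspace (hd : 0 < d) (x : Ed d) {r : ℝ} (hr : 0 < r) (b : ℝ) :
    (fun y : Ed d => r⁻¹ • (y - x)) ⁻¹' {u : Ed d | u (j0 hd) ≤ b} =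
      {y : Ed d | y (j0 hd) ≤ x (j0 hd) + r * b} := by
  ext y
  simp only [mem_preimage, mem_setOf_eq, PiLp.smul_apply, PiLp.sub_apply, smul_eq_mul]
  rw [inv_mul_le_iff₀ hr]
  constructor <;> intro h <;> linarith

lemma blowup_apply' (μ : Measure (Ed d)) (x : Ed d) (r c : ℝ) {S : Set (Ed d)}
    (hS : MeasurableSet S) :
    blowup μ x r c S = ENNReal.ofReal c * μ ((fun y : Ed d => r⁻¹ • (y - x)) ⁻¹' S) := by
  simp only [blowup, Measure.smul_apply, smul_eq_mul]
  rw [Measure.map_apply (Tmap_measurable x r) hS]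

lemma blowup_fin (μ : Measure (Ed d)) [IsLocallyFiniteMeasure μ] (x : Ed d) {r : ℝ}
    (hr : 0 < r) (c : ℝ) (S : Set (Ed d)) (hSb : Bornology.IsBounded S) :
    blowup μ x r c S ≠ ⊤ := by
  obtain ⟨ρ, hρ⟩ := hSb.subset_closedBall 0
  have hρ' : S ⊆ closedBall 0 (max ρ 0) :=
    hρ.trans (closedBall_subset_closedBall (le_max_left _ _))
  have h1 : blowup μ x r c S ≤ blowup μ x r c (closedBall 0 (max ρ 0)) := measure_mono hρ'
  rw [blowup_apply' μ x r c measurableSet_closedBall,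
    Tmap_preimage_closedBall x hr 0 (max ρ 0)] at h1
  refine (h1.trans_lt ?_).ne
  exact ENNReal.mul_lt_top ENNReal.ofReal_lt_top measure_closedBall_lt_top

/-! ### The quantitative corner structure -/

/-- Quantitative corner structure for `μ` at `x` at scale `σ`. -/
def Corner (hd : 0 < d) (μ : Measure (Ed d)) (ε : ℝ) (x : Ed d) (σ : ℝ) : Prop :=
  0 < σ ∧
  μ (closedBall x σ) ≠ 0 ∧
  μ (closedBall x (2*σ)) ≤ ENNReal.ofReal (Cdc d) * μ (closedBall x σ) ∧
  μ (closedBall x (Kc d * σ) ∩ {u : Ed d | u (j0 hd) ≤ x (j0 hd) - σ/20}) ≤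
    ENNReal.ofReal ε * μ (closedBall x σ) ∧
  ENNReal.ofReal (cWc hd) * μ (closedBall x σ) ≤
    μ (closedBall (x + σ • W0 hd) (σ/(100 * Dc d))) + ENNReal.ofReal ε * μ (closedBall x σ) ∧
  ENNReal.ofReal (c5c hd) * μ (closedBall x σ) ≤
    μ (closedBall (x + σ • V0 hd) (σ/(100 * Dc d))) + ENNReal.ofReal ε * μ (closedBall x σ)

lemma nu_locallyFinite : IsLocallyFiniteMeasure (nu d) := by
  constructor
  intro x
  refine ⟨ball x 1, ball_mem_nhds x one_pos, ?_⟩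
  exact lt_of_le_of_lt (nu_le_volume _) measure_ball_lt_top

lemma nu_halfspace_zero (hd : 0 < d) {b : ℝ} (hb : b < 0) :
    nu d {u : Ed d | u (j0 hd) ≤ b} = 0 := by
  rw [nu_apply]
  have hempty : {u : Ed d | u (j0 hd) ≤ b} ∩ orthant d = ∅ := by
    ext u
    simp only [mem_inter_iff, mem_setOf_eq, mem_empty_iff_false, iff_false, not_and]
    intro h1 h2
    simp only [orthant, mem_setOf_eq] at h2
    linarith [h2 (j0 hd)]
  rw [hempty]
  exact measure_empty

lemma measurableSet_halfspace (hd : 0 < d) (b : ℝ) :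
    MeasurableSet {u : Ed d | u (j0 hd) ≤ b} :=
  (isClosed_le (continuous_coord _) continuous_const).measurableSet

lemma cancel_k {k a b : ENNReal} (hk0 : k ≠ 0) (hktop : k ≠ ⊤) (h : k * a ≤ k * b) : a ≤ b :=
  (ENNReal.mul_le_mul_iff_right hk0 hktop).1 h

/-- The main analytic lemma: tangency of the restricted Lebesgue measure yields
quantitative corners at arbitrarily small scales. -/
lemma corner_of_tangent (hd : 0 < d) (μ : Measure (Ed d)) [IsLocallyFiniteMeasure μ] (x : Ed d)
    (ht : IsTangentMeasure μ x (volume.restrict (orthant d))) {δ : ℝ} (hδ : 0 < δ) :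
    ∃ σ, 0 < σ ∧ σ ≤ δ ∧ Corner hd μ (epsh hd) x σ := by
  obtain ⟨hLF, hne, r, c, hr0, hanti, hrlim, hc0, hweak⟩ := ht
  haveI : IsLocallyFiniteMeasure (nu d) := nu_locallyFinite
  have hweak' : WeakTendsto (fun i => blowup μ x (r i) (c i)) (nu d) := hweak
  set ms : ℕ → Measure (Ed d) := fun i => blowup μ x (r i) (c i) with hms
  have hfin : ∀ i (S : Set (Ed d)), Bornology.IsBounded S → ms i S ≠ ⊤ :=
    fun i S hb => blowup_fin μ x (hr0 i) (c i) S hb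
  have hD := Dc_pos (d := d)
  have hD2 := two_le_Dc hd
  have ha1 := a1c_pos (d := d)
  have hA2 := A2c_nonneg (d := d)
  have hcWb := cWb_pos hd
  have hc5b := c5b_pos hd
  have hεh := epsh_pos hd
  -- template sets
  set B1 : Set (Ed d) := closedBall 0 1 with hB1
  set B2 : Set (Ed d) := closedBall 0 2 with hB2
  set C1 : Set (Ed d) := closedBall (c00 d) (1/(8 * Dc d)) with hC1
  set VacU : Set (Ed d) := closedBall (0:Ed d) (Kc d) ∩ {u : Ed d | u (j0 hd) ≤ -(1/20)} with hVacU
  set WU : Set (Ed d) := closedBall (W0 hd) (1/(100*Dc d)) with hWU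
  set WUs : Set (Ed d) := closedBall (W0 hd) (1/(200*Dc d)) with hWUs
  set VU : Set (Ed d) := closedBall (V0 hd) (1/(100*Dc d)) with hVU
  set VUs : Set (Ed d) := closedBall (V0 hd) (1/(200*Dc d)) with hVUs
  -- E0 : lower bound for the unit ball
  have E0 : ∀ᶠ i in atTop, ENNReal.ofReal (a1c d / 2) ≤ ms i B1 := by
    have hsub : thick C1 (1/(8 * Dc d)) ⊆ B1 := by
      refine (thick_closedBall_subset (by positivity)).trans ?_
      apply closedBall_subset_closedBall'
      have hnorm : dist (c00 d) (0 : Ed d) ≤ 1/2 := by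
        rw [dist_eq_norm, sub_zero]
        have := norm_smul_onesv_le (d := d) (1/(2 * Dc d)) (by positivity)
        calc ‖c00 d‖ ≤ (1/(2 * Dc d)) * ((d:ℝ)+1) := this
          _ = 1/2 := by rw [show ((d:ℝ)+1) = Dc d from rfl]; field_simp
      have h8 : 1/(8 * Dc d) ≤ 1/8 := by
        apply div_le_div_of_nonneg_left (by norm_num) (by norm_num)
        nlinarith
      linarith
    have := lemL (C := C1) (Bs := B1) hweak' hfin isClosed_closedBall isBounded_closedBall
      (nonempty_closedBall.2 (by positivity)) (by positivity : (0:ℝ) < 1/(8 * Dc d)) hsub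
      measurableSet_closedBall isBounded_closedBall (half_pos ha1)
    filter_upwards [this] with i hi
    have hval : nu d C1 = ENNReal.ofReal (a1c d) := (ENNReal.ofReal_toReal (nu_closedBall_ne_top _ _)).symm
    rw [hval] at hi
    have := tsub_le_iff_right.2 hi
    calc ENNReal.ofReal (a1c d / 2) = ENNReal.ofReal (a1c d) - ENNReal.ofReal (a1c d / 2) := by
          rw [← ENNReal.ofReal_sub _ (by linarith)]; congr 1; ring
      _ ≤ ms i B1 := tsub_le_iff_right.2 hi
  -- E1 : upper bounds for balls
  have hupper : ∀ (s : ℝ), 0 < s → s + 1 ≤ Kc d + 1 →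
      ∀ᶠ i in atTop, ms i (closedBall (0:Ed d) s) ≤ ENNReal.ofReal (A2c d + 1) := by
    intro s hs hsK
    have hsub : thick (closedBall (0:Ed d) s) 1 ⊆ closedBall (0:Ed d) (Kc d + 1) := by
      refine (thick_closedBall_subset hs.le).trans (closedBall_subset_closedBall hsK)
    have := lemU (A := closedBall (0:Ed d) s) hweak' hfin measurableSet_closedBall isClosed_closedBall
      isBounded_closedBall (nonempty_closedBall.2 hs.le) one_pos one_pos
    filter_upwards [this] with i hi
    refine hi.trans ?_
    have h1 : nu d (thick (closedBall (0:Ed d) s) 1) ≤ ENNReal.ofReal (A2c d) := by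
      refine le_trans (measure_mono hsub) ?_
      rw [show ENNReal.ofReal (A2c d) = nu d (closedBall 0 (Kc d + 1)) from
        ENNReal.ofReal_toReal (nu_closedBall_ne_top _ _)]
    calc nu d (thick (closedBall (0:Ed d) s) 1) + ENNReal.ofReal 1
        ≤ ENNReal.ofReal (A2c d) + ENNReal.ofReal 1 := add_le_add_left h1 _
      _ = ENNReal.ofReal (A2c d + 1) := by rw [← ENNReal.ofReal_add hA2 (by norm_num)]
  have E1 : ∀ᶠ i in atTop, ms i B2 ≤ ENNReal.ofReal (A2c d + 1) := by
    apply hupper 2 (by norm_num); linarith [Kc_ge (d := d)]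
  have E1' : ∀ᶠ i in atTop, ms i B1 ≤ ENNReal.ofReal (A2c d + 1) := by
    apply hupper 1 (by norm_num); linarith [Kc_ge (d := d)]
  -- E2 : vacuum
  have E2 : ∀ᶠ i in atTop, ms i VacU ≤ ENNReal.ofReal (epsh hd * (a1c d / 2)) := by
    have hKc := Kc_pos (d := d)
    have hVne : VacU.Nonempty := by
      refine ⟨(-(1/20) : ℝ) • e1 hd, ?_, ?_⟩
      · rw [mem_closedBall, dist_eq_norm, sub_zero, norm_smul, Real.norm_eq_abs, norm_e1]
        rw [abs_of_nonpos (by norm_num)]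
        simp only [mul_one]
        linarith [Kc_ge (d := d)]
      · have : ((-(1/20) : ℝ) • e1 hd) (j0 hd) = -(1/20) := by
          simp only [PiLp.smul_apply, e1_apply, if_pos rfl, if_true, smul_eq_mul, mul_one]
        simp only [mem_setOf_eq, this, le_refl]
    have hVcl : IsClosed VacU :=
      isClosed_closedBall.inter (isClosed_le (continuous_coord _) continuous_const)
    have hVb : Bornology.IsBounded VacU := isBounded_closedBall.subset inter_subset_left
    have hVm : MeasurableSet VacU :=
      measurableSet_closedBall.inter (measurableSet_halfspace hd _)
    have := lemU (A := VacU) hweak' hfin hVm hVcl hVb hVne (by norm_num : (0:ℝ) < 1/40)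
      (by positivity : (0:ℝ) < epsh hd * (a1c d / 2))
    filter_upwards [this] with i hi
    refine hi.trans ?_
    have hnull : nu d (thick VacU (1/40)) = 0 := by
      apply measure_mono_null _ (nu_halfspace_zero hd (b := -(1/40)) (by norm_num))
      refine (thick_mono inter_subset_right hVne).trans ?_
      refine (thick_halfspace_subset hd).trans ?_
      intro u hu
      simp only [mem_setOf_eq] at hu ⊢
      linarith
    rw [hnull, zero_add]
  -- E3, E4 : witness and recentering balls
  have hshrink : ∀ (c0 : Ed d), thick (closedBall c0 (1/(200*Dc d))) (1/(200*Dc d)) ⊆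
      closedBall c0 (1/(100*Dc d)) := by
    intro c0
    refine (thick_closedBall_subset (by positivity)).trans ?_
    apply closedBall_subset_closedBall
    rw [← add_div]
    rw [div_le_div_iff₀ (by positivity) (by positivity)]
    ring_nf
    nlinarith [Dc_pos (d := d)]
  have E3 : ∀ᶠ i in atTop, ENNReal.ofReal (cWb hd / 2) ≤ ms i WU := by
    have := lemL (C := WUs) (Bs := WU) hweak' hfin isClosed_closedBall isBounded_closedBall
      (nonempty_closedBall.2 (by positivity)) (by positivity : (0:ℝ) < 1/(200 * Dc d))
      (hshrink (W0 hd)) measurableSet_closedBall isBounded_closedBall (half_pos hcWb)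
    filter_upwards [this] with i hi
    have hval : nu d WUs = ENNReal.ofReal (cWb hd) :=
      (ENNReal.ofReal_toReal (nu_closedBall_ne_top _ _)).symm
    rw [hval] at hi
    calc ENNReal.ofReal (cWb hd / 2) = ENNReal.ofReal (cWb hd) - ENNReal.ofReal (cWb hd / 2) := by
          rw [← ENNReal.ofReal_sub _ (by linarith)]; congr 1; ring
      _ ≤ ms i WU := tsub_le_iff_right.2 hi
  have E4 : ∀ᶠ i in atTop, ENNReal.ofReal (c5b hd / 2) ≤ ms i VU := by
    have := lemL (C := VUs) (Bs := VU) hweak' hfin isClosed_closedBall isBounded_closedBall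
      (nonempty_closedBall.2 (by positivity)) (by positivity : (0:ℝ) < 1/(200 * Dc d))
      (hshrink (V0 hd)) measurableSet_closedBall isBounded_closedBall (half_pos hc5b)
    filter_upwards [this] with i hi
    have hval : nu d VUs = ENNReal.ofReal (c5b hd) :=
      (ENNReal.ofReal_toReal (nu_closedBall_ne_top _ _)).symm
    rw [hval] at hi
    calc ENNReal.ofReal (c5b hd / 2) = ENNReal.ofReal (c5b hd) - ENNReal.ofReal (c5b hd / 2) := by
          rw [← ENNReal.ofReal_sub _ (by linarith)]; congr 1; ring
      _ ≤ ms i VU := tsub_le_iff_right.2 hi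
  -- smallness of scales
  have E5 : ∀ᶠ i in atTop, r i ≤ δ := Filter.Tendsto.eventually_le_const hδ hrlim
  -- pick a common index
  obtain ⟨i, hh⟩ := ((((((E0.and E1).and E1').and E2).and E3).and E4).and E5).exists
  obtain ⟨⟨⟨⟨⟨⟨h0, h1⟩, h1'⟩, h2⟩, h3⟩, h4⟩, h5⟩ := hh
  set σ := r i with hσdef
  have hσ : 0 < σ := hr0 i
  set k := ENNReal.ofReal (c i) with hk
  have hk0 : k ≠ 0 := (ENNReal.ofReal_pos.2 (hc0 i)).ne'
  have hktop : k ≠ ⊤ := ENNReal.ofReal_ne_top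
  have pB1 : ms i B1 = k * μ (closedBall x σ) := by
    rw [hms]
    simp only [hB1]
    rw [blowup_apply' μ x σ (c i) measurableSet_closedBall,
      Tmap_preimage_closedBall x hσ 0 1, smul_zero, add_zero, mul_one]
  have pB2 : ms i B2 = k * μ (closedBall x (2*σ)) := by
    rw [hms]
    simp only [hB2]
    rw [blowup_apply' μ x σ (c i) measurableSet_closedBall,
      Tmap_preimage_closedBall x hσ 0 2, smul_zero, add_zero, mul_comm σ 2]
  have pWU : ms i WU = k * μ (closedBall (x + σ • W0 hd) (σ/(100 * Dc d))) := by
    rw [hms]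
    simp only [hWU]
    rw [blowup_apply' μ x σ (c i) measurableSet_closedBall,
      Tmap_preimage_closedBall x hσ (W0 hd) (1/(100 * Dc d)), mul_one_div]
  have pVU : ms i VU = k * μ (closedBall (x + σ • V0 hd) (σ/(100 * Dc d))) := by
    rw [hms]
    simp only [hVU]
    rw [blowup_apply' μ x σ (c i) measurableSet_closedBall,
      Tmap_preimage_closedBall x hσ (V0 hd) (1/(100 * Dc d)), mul_one_div]
  have pVac : ms i VacU =
      k * μ (closedBall x (Kc d * σ) ∩ {u : Ed d | u (j0 hd) ≤ x (j0 hd) - σ/20}) := by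
    rw [hms]
    simp only [hVacU]
    rw [blowup_apply' μ x σ (c i)
      (measurableSet_closedBall.inter (measurableSet_halfspace hd _)),
      preimage_inter, Tmap_preimage_closedBall x hσ 0 (Kc d),
      Tmap_preimage_halfspace hd x hσ (-(1/20)), smul_zero, add_zero, mul_comm σ (Kc d)]
    have harith : x (j0 hd) + σ * (-(1/20)) = x (j0 hd) - σ/20 := by ring
    rw [harith]
  clear_value k
  refine ⟨σ, hσ, h5, hσ, ?_, ?_, ?_, ?_, ?_⟩
  · -- clause 1 : nonvanishing
    intro hzero
    rw [pB1, hzero, mul_zero] at h0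
    have := ENNReal.ofReal_eq_zero.1 (le_antisymm h0 zero_le)
    linarith
  · -- clause 2 : doubling
    apply cancel_k hk0 hktop
    rw [← pB2]
    calc ms i B2 ≤ ENNReal.ofReal (A2c d + 1) := h1
      _ = ENNReal.ofReal (Cdc d) * ENNReal.ofReal (a1c d / 2) := by
          rw [← ENNReal.ofReal_mul (le_of_lt (Cdc_pos (d := d)))]
          congr 1
          simp only [Cdc]
          field_simp
      _ ≤ ENNReal.ofReal (Cdc d) * ms i B1 := mul_le_mul_right h0 _
      _ = k * (ENNReal.ofReal (Cdc d) * μ (closedBall x σ)) := by rw [pB1]; ring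
  · -- clause 3 : vacuum
    apply cancel_k hk0 hktop
    rw [← pVac]
    calc ms i VacU ≤ ENNReal.ofReal (epsh hd * (a1c d / 2)) := h2
      _ = ENNReal.ofReal (epsh hd) * ENNReal.ofReal (a1c d / 2) :=
          ENNReal.ofReal_mul hεh.le
      _ ≤ ENNReal.ofReal (epsh hd) * ms i B1 := mul_le_mul_right h0 _
      _ = k * (ENNReal.ofReal (epsh hd) * μ (closedBall x σ)) := by rw [pB1]; ring
  · -- clause 4 : witness ball lower bound
    apply cancel_k hk0 hktop
    calc k * (ENNReal.ofReal (cWc hd) * μ (closedBall x σ))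
        = ENNReal.ofReal (cWc hd) * ms i B1 := by rw [pB1]; ring
      _ ≤ ENNReal.ofReal (cWc hd) * ENNReal.ofReal (A2c d + 1) := mul_le_mul_right h1' _
      _ = ENNReal.ofReal (cWb hd / 2) := by
          rw [← ENNReal.ofReal_mul (cWc_pos hd).le]
          congr 1
          have hA2' : A2c d + 1 ≠ 0 := by linarith
          simp only [cWc]
          field_simp
      _ ≤ ms i WU := h3
      _ = k * μ (closedBall (x + σ • W0 hd) (σ/(100 * Dc d))) := pWU
      _ ≤ k * (μ (closedBall (x + σ • W0 hd) (σ/(100 * Dc d))) +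
          ENNReal.ofReal (epsh hd) * μ (closedBall x σ)) := mul_le_mul_right le_self_add _
  · -- clause 5 : recentering ball lower bound
    apply cancel_k hk0 hktop
    calc k * (ENNReal.ofReal (c5c hd) * μ (closedBall x σ))
        = ENNReal.ofReal (c5c hd) * ms i B1 := by rw [pB1]; ring
      _ ≤ ENNReal.ofReal (c5c hd) * ENNReal.ofReal (A2c d + 1) := mul_le_mul_right h1' _
      _ = ENNReal.ofReal (c5b hd / 2) := by
          rw [← ENNReal.ofReal_mul (c5c_pos hd).le]
          congr 1
          have hA2' : A2c d + 1 ≠ 0 := by linarith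
          simp only [c5c]
          field_simp
      _ ≤ ms i VU := h4
      _ = k * μ (closedBall (x + σ • V0 hd) (σ/(100 * Dc d))) := pVU
      _ ≤ k * (μ (closedBall (x + σ • V0 hd) (σ/(100 * Dc d))) +
          ENNReal.ofReal (epsh hd) * μ (closedBall x σ)) := mul_le_mul_right le_self_add _


/-! ### The exclusion lemma: two corners in the special relative position are impossible -/

set_option maxHeartbeats 1600000 in
lemma exclusion (hd : 0 < d) (μ : Measure (Ed d)) [IsLocallyFiniteMeasure μ]
    {x z : Ed d} {σ τ : ℝ}
    (hτ1 : etac d * σ ≤ τ) (hτ2 : τ ≤ 11/10 * σ)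
    (hz : dist z (x + σ • V0 hd) ≤ σ/25)
    (hcx : Corner hd μ (epsh hd) x σ) (hcz : Corner hd μ (epsh hd) z τ) : False := by
  obtain ⟨hσ, hxne, hxdoub, -, hxW, -⟩ := hcx
  obtain ⟨hτ, -, -, hzvac, -, -⟩ := hcz
  have hD := Dc_pos (d := d)
  have hD2 := two_le_Dc hd
  have hKc := Kc_pos (d := d)
  have hεh := epsh_pos hd
  have hcW := cWc_pos hd
  have hCd := Cdc_pos (d := d)
  -- (GA) the witness ball sits in the vacuum region of `z`
  have hGA : closedBall (x + σ • W0 hd) (σ/(100 * Dc d)) ⊆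
      closedBall z (Kc d * τ) ∩ {u : Ed d | u (j0 hd) ≤ z (j0 hd) - τ/20} := by
    have hdistWz : dist (x + σ • W0 hd) z ≤ 21/100 * σ := by
      calc dist (x + σ • W0 hd) z
          ≤ dist (x + σ • W0 hd) (x + σ • V0 hd) + dist (x + σ • V0 hd) z := dist_triangle _ _ _
        _ ≤ 17/100 * σ + σ/25 := by
            apply add_le_add
            · rw [dist_eq_norm]
              have : x + σ • W0 hd - (x + σ • V0 hd) = σ • (W0 hd - V0 hd) := by
                rw [smul_sub]; abel
              rw [this, norm_smul, Real.norm_eq_abs, abs_of_nonneg hσ.le]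
              have h17 : ‖W0 hd - V0 hd‖ ≤ 17/100 := by
                rw [← norm_neg, neg_sub]; exact norm_V0_sub_W0 hd
              nlinarith
            · rw [dist_comm]; exact hz
        _ = 21/100 * σ := by ring
    have hKτ : 2 * σ ≤ Kc d * τ := by
      calc 2 * σ = (Kc d * etac d) * σ := by rw [Kc_mul_etac]
        _ = Kc d * (etac d * σ) := by ring
        _ ≤ Kc d * τ := by nlinarith
    intro u hu
    constructor
    · refine closedBall_subset_closedBall' ?_ hu
      have h1 : σ/(100 * Dc d) ≤ σ/200 := by
        apply div_le_div_of_nonneg_left hσ.le (by norm_num)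
        nlinarith
      linarith
    · -- slab estimate
      have hu1 : u (j0 hd) ≤ (x + σ • W0 hd) (j0 hd) + σ/(100 * Dc d) :=
        coord_le_of_mem_closedBall hu _
      have hW0j : (x + σ • W0 hd) (j0 hd) = x (j0 hd) + σ * (3/20 + 1/(10 * Dc d)) := by
        simp only [PiLp.add_apply, PiLp.smul_apply, smul_eq_mul]
        rw [W0_apply hd (j0 hd), if_pos rfl]
      have hV0j : (x + σ • V0 hd) (j0 hd) = x (j0 hd) + σ * (8/25 + 1/(10 * Dc d)) := by
        simp only [PiLp.add_apply, PiLp.smul_apply, smul_eq_mul]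
        rw [V0_apply hd (j0 hd), if_pos rfl]
      have hzj : x (j0 hd) + σ * (8/25 + 1/(10 * Dc d)) - σ/25 ≤ z (j0 hd) := by
        have h1 := coord_dist_le z (x + σ • V0 hd) (j0 hd)
        have h2 := (abs_le.1 (h1.trans hz)).1
        rw [hV0j] at h2
        linarith
      simp only [mem_setOf_eq]
      rw [hW0j] at hu1
      have h3 : σ/(100 * Dc d) ≤ σ/200 := by
        apply div_le_div_of_nonneg_left hσ.le (by norm_num)
        nlinarith
      have h4 : σ * (1/(10 * Dc d)) ≤ σ * (1/20) := by
        apply mul_le_mul_of_nonneg_left _ hσ.le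
        apply div_le_div_of_nonneg_left (by norm_num) (by norm_num)
        nlinarith
      nlinarith
  -- (GB) the ball of z is dominated by the double ball of x
  have hGB : closedBall z τ ⊆ closedBall x (2*σ) := by
    apply closedBall_subset_closedBall'
    have h1 : dist z x ≤ σ/25 + σ/2 := by
      calc dist z x ≤ dist z (x + σ • V0 hd) + dist (x + σ • V0 hd) x := dist_triangle _ _ _
        _ ≤ σ/25 + σ/2 := by
            apply add_le_add hz
            rw [dist_eq_norm, add_sub_cancel_left, norm_smul, Real.norm_eq_abs,
              abs_of_nonneg hσ.le]
            nlinarith [norm_V0_le hd]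
    linarith
  -- the measure chain
  set Nx := μ (closedBall x σ) with hNx
  set Nz := μ (closedBall z τ) with hNz
  have hNxtop : Nx ≠ ⊤ := measure_closedBall_lt_top.ne
  have hWvac : μ (closedBall (x + σ • W0 hd) (σ/(100 * Dc d))) ≤ ENNReal.ofReal (epsh hd) * Nz :=
    le_trans (measure_mono hGA) hzvac
  have hNzb : Nz ≤ ENNReal.ofReal (Cdc d) * Nx :=
    le_trans (measure_mono hGB) hxdoub
  have hchain : ENNReal.ofReal (cWc hd) * Nx ≤ ENNReal.ofReal (cWc hd / 2) * Nx := by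
    calc ENNReal.ofReal (cWc hd) * Nx
        ≤ μ (closedBall (x + σ • W0 hd) (σ/(100 * Dc d))) + ENNReal.ofReal (epsh hd) * Nx := hxW
      _ ≤ ENNReal.ofReal (epsh hd) * Nz + ENNReal.ofReal (epsh hd) * Nx :=
          add_le_add_left hWvac _
      _ ≤ ENNReal.ofReal (epsh hd) * (ENNReal.ofReal (Cdc d) * Nx) +
          ENNReal.ofReal (epsh hd) * Nx := add_le_add_left (mul_le_mul_right hNzb _) _
      _ = ENNReal.ofReal (epsh hd * (Cdc d + 1)) * Nx := by
          rw [show epsh hd * (Cdc d + 1) = epsh hd * Cdc d + epsh hd by ring,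
            ENNReal.ofReal_add (by positivity) hεh.le,
            ENNReal.ofReal_mul hεh.le, add_mul]
          ring
      _ ≤ ENNReal.ofReal (cWc hd / 2) * Nx := by
          apply mul_le_mul_left
          apply ENNReal.ofReal_le_ofReal
          have h1 : epsh hd ≤ cWc hd / (2 * (Cdc d + 1)) := min_le_left _ _
          rw [le_div_iff₀ (by positivity)] at h1
          nlinarith
  have hle : cWc hd ≤ cWc hd / 2 := by
    have := (ENNReal.mul_le_mul_iff_left hxne hNxtop).1 hchain
    exact (ENNReal.ofReal_le_ofReal_iff (by positivity)).1 this
  linarith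


/-! ### Support lemmas -/

lemma isClosed_sptM (μ : Measure (Ed d)) : IsClosed (sptM μ) := by
  rw [← isOpen_compl_iff, Metric.isOpen_iff]
  intro s hs
  rw [mem_compl_iff, sptM, mem_setOf_eq] at hs
  push_neg at hs
  obtain ⟨r, hr, hμr⟩ := hs
  refine ⟨r/2, by linarith, fun z hz => ?_⟩
  rw [mem_compl_iff, sptM, mem_setOf_eq]
  push_neg
  refine ⟨r/2, by linarith, ?_⟩
  have hsub : closedBall z (r/2) ⊆ closedBall s r := by
    apply closedBall_subset_closedBall'
    rw [mem_ball] at hz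
    linarith [hz.le]
  exact le_trans (measure_mono hsub) hμr

lemma exists_sptM_near (μ : Measure (Ed d)) {c : Ed d} {ρ : ℝ} (hρ : 0 < ρ)
    (h : μ (closedBall c ρ) ≠ 0) : ∃ s ∈ sptM μ, dist s c ≤ ρ := by
  by_contra hcon
  push_neg at hcon
  have hpt : ∀ y : Ed d, y ∈ closedBall c ρ → ∃ ry, ry > 0 ∧ μ (closedBall y ry) = 0 := by
    intro y hy
    have hns : y ∉ sptM μ := by
      intro hmem
      exact absurd (mem_closedBall.1 hy) (not_le.2 (hcon y hmem))
    rw [sptM, mem_setOf_eq] at hns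
    push_neg at hns
    obtain ⟨r, hr, hμr⟩ := hns
    exact ⟨r, hr, le_antisymm hμr zero_le⟩
  choose! ry hry hnull using hpt
  have hcover : closedBall c ρ ⊆ ⋃ y : closedBall c ρ, ball (y : Ed d) (ry y) := by
    intro u hu
    exact mem_iUnion.2 ⟨⟨u, hu⟩, mem_ball_self (hry u hu)⟩
  obtain ⟨t, ht⟩ := (isCompact_closedBall c ρ).elim_finite_subcover
    (fun y : closedBall c ρ => ball (y : Ed d) (ry y)) (fun _ => isOpen_ball) hcover
  apply h
  refine le_antisymm ?_ zero_le
  calc μ (closedBall c ρ) ≤ μ (⋃ y ∈ t, ball (y : Ed d) (ry y)) := measure_mono ht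
    _ ≤ ∑ y ∈ t, μ (ball (y : Ed d) (ry y)) := measure_biUnion_finset_le t _
    _ = 0 := by
        apply Finset.sum_eq_zero
        intro y _
        refine le_antisymm ?_ zero_le
        calc μ (ball (y : Ed d) (ry y)) ≤ μ (closedBall (y : Ed d) (ry y)) :=
              measure_mono ball_subset_closedBall
          _ = 0 := hnull y y.2

/-! ### Local-max selection -/

lemma localmax_selection (hd : 0 < d) (μ : Measure (Ed d)) {B : ℝ}
    (n : ℕ) :
    ∀ x σ, Corner hd μ (epsh hd) x σ → σ ≤ B → B ≤ σ * (11/10)^n →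
    ∃ xc σc, Corner hd μ (epsh hd) xc σc ∧ σ ≤ σc ∧ σc ≤ B ∧ dist xc x ≤ 10 * (σc - σ) ∧
      ∀ z τ, dist z xc ≤ σc → 11/10 * σc < τ → τ ≤ B → ¬ Corner hd μ (epsh hd) z τ := by
  induction n with
  | zero =>
    intro x σ hc hσB hBσ
    simp only [pow_zero, mul_one] at hBσ
    refine ⟨x, σ, hc, le_refl _, hσB, by simp, ?_⟩
    intro z τ hdz hτ1 hτ2 hcz
    have hσ0 : 0 < σ := hc.1
    linarith
  | succ n ih =>
    intro x σ hc hσB hBσ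
    by_cases hmax : ∀ z τ, dist z x ≤ σ → 11/10 * σ < τ → τ ≤ B → ¬ Corner hd μ (epsh hd) z τ
    · exact ⟨x, σ, hc, le_refl _, hσB, by simp, hmax⟩
    · push_neg at hmax
      obtain ⟨z, τ, hdz, hτ1, hτ2, hcz⟩ := hmax
      have hσ0 : 0 < σ := hc.1
      have hBτ : B ≤ τ * (11/10)^n := by
        have h1 : B ≤ σ * (11/10)^(n+1) := hBσ
        have h2 : σ * (11/10)^(n+1) = (11/10 * σ) * (11/10)^n := by ring
        have h3 : (0:ℝ) < (11/10:ℝ)^n := by positivity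
        nlinarith
      obtain ⟨xc, σc, hcc, hτσc, hσcB, hdxc, hloc⟩ := ih z τ hcz hτ2 hBτ
      refine ⟨xc, σc, hcc, by linarith, hσcB, ?_, hloc⟩
      calc dist xc x ≤ dist xc z + dist z x := dist_triangle _ _ _
        _ ≤ 10 * (σc - τ) + σ := by linarith
        _ ≤ 10 * (σc - σ) := by linarith

lemma localmax_exists (hd : 0 < d) (μ : Measure (Ed d)) {B : ℝ}
    {σ : ℝ} {x' : Ed d} (hc : Corner hd μ (epsh hd) x' σ) (hσB : σ ≤ B) :
    ∃ xc σc, Corner hd μ (epsh hd) xc σc ∧ σ ≤ σc ∧ σc ≤ B ∧ dist xc x' ≤ 10 * (σc - σ) ∧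
      ∀ z τ, dist z xc ≤ σc → 11/10 * σc < τ → τ ≤ B → ¬ Corner hd μ (epsh hd) z τ := by
  have hσ0 : 0 < σ := hc.1
  obtain ⟨n, hn⟩ := pow_unbounded_of_one_lt (B / σ) (by norm_num : (1:ℝ) < 11/10)
  have hBσ : B ≤ σ * (11/10)^n := by
    rw [div_lt_iff₀ hσ0] at hn
    nlinarith
  exact localmax_selection hd μ n x' σ hc hσB hBσ


/-! ### The construction step -/

set_option maxHeartbeats 1600000 in
lemma step_lemma (hd : 0 < d) (μ : Measure (Ed d)) [IsLocallyFiniteMeasure μ]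
    {y : Ed d} {B : ℝ} (hB : 0 < B)
    (hinv : ∃ s ∈ sptM μ, dist s y ≤ 10 * B) :
    ∃ y' B', 0 < B' ∧ B' ≤ B/4 ∧ dist y' y ≤ 36 * B ∧
      (∃ s ∈ sptM μ, dist s y' ≤ 10 * B') ∧
      ∀ τ u, B' ≤ τ → τ ≤ B → dist u y' ≤ 58 * B' → ¬ Corner hd μ (epsh hd) u τ := by
  by_cases htrig : ∃ z σ, dist z y ≤ 25 * B ∧ 0 < σ ∧ σ ≤ B ∧ Corner hd μ (epsh hd) z σ
  · -- a corner exists nearby: recenter into it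
    obtain ⟨z0, σ0, hdz0, hσ00, hσ0B, hcz0⟩ := htrig
    obtain ⟨xc, σc, hcc, hσ0c, hσcB, hdxc, hloc⟩ := localmax_exists hd μ hcz0 hσ0B
    have hσc : 0 < σc := hcc.1
    have hD := Dc_pos (d := d)
    have hD2 := two_le_Dc hd
    have hη := etac_pos (d := d)
    have hηle : etac d ≤ 1/2000 := by
      simp only [etac]
      rw [div_le_div_iff₀ (by positivity) (by norm_num)]
      nlinarith
    have hdy'xc : dist (xc + σc • V0 hd) xc ≤ σc/2 := by
      rw [dist_eq_norm, add_sub_cancel_left, norm_smul, Real.norm_eq_abs,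
        abs_of_nonneg hσc.le]
      nlinarith [norm_V0_le hd]
    refine ⟨xc + σc • V0 hd, etac d * σc, by positivity, ?_, ?_, ?_, ?_⟩
    · nlinarith
    · calc dist (xc + σc • V0 hd) y
          ≤ dist (xc + σc • V0 hd) xc + dist xc z0 + dist z0 y := dist_triangle4 _ _ _ _
        _ ≤ σc/2 + 10 * (σc - σ0) + 25 * B := add_le_add (add_le_add hdy'xc hdxc) hdz0
        _ ≤ 36 * B := by nlinarith
    · -- support invariant via the recentering ball
      have hVne : μ (closedBall (xc + σc • V0 hd) (σc/(100 * Dc d))) ≠ 0 := by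
        intro hzero
        obtain ⟨-, hxne, -, -, -, hxV⟩ := hcc
        rw [hzero, zero_add] at hxV
        have hNxtop : μ (closedBall xc σc) ≠ ⊤ := measure_closedBall_lt_top.ne
        have h1 := (ENNReal.mul_le_mul_iff_left hxne hNxtop).1 hxV
        have h2 := (ENNReal.ofReal_le_ofReal_iff (epsh_pos hd).le).1 h1
        have h3 : epsh hd ≤ c5c hd / 2 := min_le_right _ _
        have h4 := c5c_pos hd
        linarith
      obtain ⟨s, hs, hds⟩ := exists_sptM_near μ (by positivity) hVne
      refine ⟨s, hs, ?_⟩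
      have heq : σc/(100 * Dc d) = 10 * (etac d * σc) := by
        simp only [etac]; field_simp; ring
      linarith [hds, heq ▸ hds]
    · -- the exclusion claims
      intro τ u hτ1 hτ2 hdu
      have hdu' : dist u (xc + σc • V0 hd) ≤ σc/25 := by
        have h2 : 58 * (etac d * σc) ≤ σc/25 := by
          have : etac d ≤ 1/(2000 : ℝ) := hηle
          nlinarith
        linarith
      by_cases hτc : τ ≤ 11/10 * σc
      · intro hcu
        exact exclusion hd μ hτ1 hτc hdu' hcc hcu
      · push_neg at hτc
        apply hloc u τ ?_ hτc hτ2
        calc dist u xc ≤ dist u (xc + σc • V0 hd) + dist (xc + σc • V0 hd) xc :=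
              dist_triangle _ _ _
          _ ≤ σc/25 + σc/2 := add_le_add hdu' hdy'xc
          _ ≤ σc := by linarith
  · -- no corner nearby: recenter onto the support and shrink
    push_neg at htrig
    obtain ⟨s, hs, hds⟩ := hinv
    refine ⟨s, B/4, by linarith, le_refl _, by linarith, ⟨s, hs, by simp; linarith⟩, ?_⟩
    intro τ u hτ1 hτ2 hdu hcu
    have hdu' : dist u y ≤ 25 * B := by
      calc dist u y ≤ dist u s + dist s y := dist_triangle _ _ _
        _ ≤ 58 * (B/4) + 10 * B := add_le_add hdu hds
        _ ≤ 25 * B := by linarith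
    exact htrig u τ hdu' (by linarith) hτ2 hcu


/-! ### The recursion producing a corner-free support point -/

set_option maxHeartbeats 1600000 in
lemma no_corner_point (hd : 0 < d) (μ : Measure (Ed d)) [IsLocallyFiniteMeasure μ]
    {x0 : Ed d} (hx0 : x0 ∈ sptM μ) :
    ∃ xs ∈ sptM μ, ∀ τ, 0 < τ → τ ≤ 1 → ¬ Corner hd μ (epsh hd) xs τ := by
  classical
  let T := {p : Ed d × ℝ // 0 < p.2 ∧ ∃ s ∈ sptM μ, dist s p.1 ≤ 10 * p.2}
  have hstep : ∀ p : T, ∃ q : T, q.1.2 ≤ p.1.2/4 ∧ dist q.1.1 p.1.1 ≤ 36 * p.1.2 ∧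
      ∀ τ u, q.1.2 ≤ τ → τ ≤ p.1.2 → dist u q.1.1 ≤ 58 * q.1.2 →
        ¬ Corner hd μ (epsh hd) u τ := by
    rintro ⟨⟨yy, BB⟩, hBB, hinvv⟩
    obtain ⟨y', B', h1, h2, h3, h4, h5⟩ := step_lemma hd μ hBB hinvv
    exact ⟨⟨(y', B'), h1, h4⟩, h2, h3, h5⟩
  choose g hg1 hg2 hg3 using hstep
  let init : T := ⟨(x0, 1), one_pos, ⟨x0, hx0, by simp⟩⟩
  let seq : ℕ → T := fun n => Nat.rec (motive := fun _ => T) init (fun _ p => g p) n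
  have hseq : ∀ n, seq (n+1) = g (seq n) := fun n => rfl
  set y : ℕ → Ed d := fun n => (seq n).1.1 with hy
  set Bf : ℕ → ℝ := fun n => (seq n).1.2 with hBf
  have hB0 : Bf 0 = 1 := rfl
  have hBpos : ∀ n, 0 < Bf n := fun n => (seq n).2.1
  have hBquarter : ∀ n, Bf (n+1) ≤ Bf n / 4 := fun n => hg1 (seq n)
  have hdist : ∀ n, dist (y (n+1)) (y n) ≤ 36 * Bf n := fun n => hg2 (seq n)
  have hclaims : ∀ n, ∀ τ u, Bf (n+1) ≤ τ → τ ≤ Bf n → dist u (y (n+1)) ≤ 58 * Bf (n+1) →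
      ¬ Corner hd μ (epsh hd) u τ := fun n => hg3 (seq n)
  have hBgeo : ∀ n, Bf n ≤ (1/4 : ℝ)^n := by
    intro n
    induction n with
    | zero => simp [hB0]
    | succ n ih =>
      calc Bf (n+1) ≤ Bf n / 4 := hBquarter n
        _ ≤ (1/4:ℝ)^n / 4 := by linarith
        _ = (1/4:ℝ)^(n+1) := by ring
  have htele : ∀ n m, m ≤ n → dist (y n) (y m) ≤ 48 * (Bf m - Bf n) := by
    intro n
    induction n with
    | zero =>
      intro m hm
      interval_cases m
      simp
    | succ n ih =>
      intro m hm
      rcases Nat.eq_or_lt_of_le hm with he | hlt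
      · rw [he]; simp
      · have hm' : m ≤ n := Nat.lt_succ_iff.1 hlt
        calc dist (y (n+1)) (y m) ≤ dist (y (n+1)) (y n) + dist (y n) (y m) :=
              dist_triangle _ _ _
          _ ≤ 36 * Bf n + 48 * (Bf m - Bf n) := add_le_add (hdist n) (ih m hm')
          _ ≤ 48 * (Bf m - Bf (n+1)) := by nlinarith [hBquarter n, hBpos (n+1)]
  have hcauchy : CauchySeq y := by
    apply cauchySeq_of_le_geometric (1/4 : ℝ) 36 (by norm_num)
    intro n
    rw [dist_comm]
    calc dist (y (n+1)) (y n) ≤ 36 * Bf n := hdist n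
      _ ≤ 36 * (1/4:ℝ)^n := by nlinarith [hBgeo n]
  obtain ⟨xs, hxs⟩ := cauchySeq_tendsto_of_complete hcauchy
  have hlim : ∀ m, dist xs (y m) ≤ 48 * Bf m := by
    intro m
    have h1 : Tendsto (fun n => dist (y n) (y m)) atTop (𝓝 (dist xs (y m))) :=
      hxs.dist tendsto_const_nhds
    apply le_of_tendsto h1
    filter_upwards [eventually_ge_atTop m] with n hn
    calc dist (y n) (y m) ≤ 48 * (Bf m - Bf n) := htele n m hn
      _ ≤ 48 * Bf m := by nlinarith [hBpos n]
  have hxsspt : xs ∈ sptM μ := by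
    have hsk : ∀ k, ∃ s ∈ sptM μ, dist s (y k) ≤ 10 * Bf k := fun k => (seq k).2.2
    choose sk hsk1 hsk2 using hsk
    have htend : Tendsto sk atTop (𝓝 xs) := by
      rw [tendsto_iff_dist_tendsto_zero]
      apply squeeze_zero (fun n => dist_nonneg) (g := fun n => 58 * (1/4:ℝ)^n)
      · intro n
        calc dist (sk n) xs ≤ dist (sk n) (y n) + dist (y n) xs := dist_triangle _ _ _
          _ ≤ 10 * Bf n + 48 * Bf n := by
              refine add_le_add (hsk2 n) ?_
              rw [dist_comm]; exact hlim n
          _ = 58 * Bf n := by ring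
          _ ≤ 58 * (1/4:ℝ)^n := by nlinarith [hBgeo n]
      · rw [show (0:ℝ) = 58 * 0 by ring]
        exact Tendsto.const_mul _ (tendsto_pow_atTop_nhds_zero_of_lt_one (by norm_num) (by norm_num))
    exact (isClosed_sptM μ).mem_of_tendsto htend (Filter.Eventually.of_forall hsk1)
  refine ⟨xs, hxsspt, ?_⟩
  intro τ hτ0 hτ1
  have hexk : ∃ k, Bf (k+1) < τ := by
    obtain ⟨n, hn⟩ := exists_pow_lt_of_lt_one hτ0 (by norm_num : (1/4:ℝ) < 1)
    refine ⟨n, lt_of_le_of_lt ?_ hn⟩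
    calc Bf (n+1) ≤ (1/4:ℝ)^(n+1) := hBgeo (n+1)
      _ ≤ (1/4:ℝ)^n := by
          rw [pow_succ]
          nlinarith [pow_pos (by norm_num : (0:ℝ) < 1/4) n]
  set k := Nat.find hexk with hkdef
  have hk1 : Bf (k+1) < τ := Nat.find_spec hexk
  have hk2 : τ ≤ Bf k := by
    rcases Nat.eq_zero_or_pos k with h0 | hpos
    · rw [h0, hB0]; exact hτ1
    · obtain ⟨k', hk'⟩ := Nat.exists_eq_succ_of_ne_zero hpos.ne'
      have hmin := Nat.find_min hexk (m := k') (by rw [← hkdef] at *; omega)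
      rw [hk']
      linarith [not_lt.1 hmin]
  exact hclaims k τ xs hk1.le hk2 (le_trans (hlim (k+1)) (by nlinarith [hBpos (k+1)]))

end Stmt7

/-- if `μ` is a Radon measure on ℝ^d with non-empty support, then there is
`x ∈ spt μ` with `L^d ∉ Tan(μ,x)` or `L^{d,+} ∉ Tan(μ,x)`, where `L^{d,+} = L^d ⌞ ℝ^{d,+}`. -/
theorem stmt_7 (d : ℕ) (hd : 0 < d) (μ : Measure (Ed d))
    (hRadon : IsLocallyFiniteMeasure μ) (hspt : (sptM μ).Nonempty) :
    ∃ x ∈ sptM μ,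
      ¬ IsTangentMeasure μ x volume ∨
      ¬ IsTangentMeasure μ x (volume.restrict (orthant d)) := by
  haveI := hRadon
  obtain ⟨x0, hx0⟩ := hspt
  obtain ⟨xs, hxs, hnoc⟩ := Stmt7.no_corner_point hd μ hx0
  refine ⟨xs, hxs, Or.inr ?_⟩
  intro ht
  obtain ⟨σ, hσ0, hσ1, hc⟩ := Stmt7.corner_of_tangent hd μ xs ht one_pos
  exact hnoc σ hσ0 hσ1 hc

end
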